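/- arXiv:2512.04595 — 3 statements merged into one kernel-verified Lean document; each statement's English description precedes it below -/
import Mathlib

section
/- Let a < 0 and F(x) = max(x + a, 0). Define C[v] = (2/π) ∫₀^π F(v·cos φ)·cos φ dφ. Then for 0 ≤ v < |a|, C[v] = 0, and for v > |a|, C[v] = (1/π)·(v·arccos(-a/v) + a·√(v² - a²)/v). -/
open Real

theorem shifted_relu_neg_fundamental_harmonic (a : ℝ) (ha : a < 0) :
    (∀ v : ℝ, 0 ≤ v → v < |a| →
      (2 / π) * ∫ φ in (0:ℝ)..π, max (v * Real.cos φ + a) 0 * Real.cos φ = 0) ∧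
    (∀ v : ℝ, |a| < v →
      (2 / π) * ∫ φ in (0:ℝ)..π, max (v * Real.cos φ + a) 0 * Real.cos φ =
        (1 / π) * (v * Real.arccos (-a / v) + a * Real.sqrt (v ^ 2 - a ^ 2) / v)) := by
  constructor
  · intro v hv0 hv
    rw [abs_of_neg ha] at hv
    have heq : ∀ φ ∈ Set.uIcc (0:ℝ) π,
        max (v * Real.cos φ + a) 0 * Real.cos φ = 0 := by
      intro φ _
      have h1 : v * Real.cos φ ≤ v := by nlinarith [Real.cos_le_one φ]
      have h2 : v * Real.cos φ + a ≤ 0 := by linarith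
      rw [max_eq_right h2, zero_mul]
    rw [intervalIntegral.integral_congr heq, intervalIntegral.integral_zero, mul_zero]
  · intro v hv
    rw [abs_of_neg ha] at hv
    have hv0 : 0 < v := lt_trans (by linarith) hv
    set t := -a / v with ht
    have ht0 : 0 < t := div_pos (by linarith) hv0
    have ht1 : t < 1 := (div_lt_one hv0).mpr hv
    set φ₀ := Real.arccos t with hφ₀
    have hc : Real.cos φ₀ = t := Real.cos_arccos (by linarith) ht1.le
    have hs : Real.sin φ₀ = Real.sqrt (1 - t ^ 2) := Real.sin_arccos t
    have hφ₀0 : 0 ≤ φ₀ := Real.arccos_nonneg t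
    have hφ₀π : φ₀ ≤ π := Real.arccos_le_pi t
    have hcont : Continuous fun φ => max (v * Real.cos φ + a) 0 * Real.cos φ := by
      fun_prop
    have hsplit : (∫ φ in (0:ℝ)..π, max (v * Real.cos φ + a) 0 * Real.cos φ) =
        (∫ φ in (0:ℝ)..φ₀, max (v * Real.cos φ + a) 0 * Real.cos φ)
        + ∫ φ in φ₀..π, max (v * Real.cos φ + a) 0 * Real.cos φ := by
      rw [intervalIntegral.integral_add_adjacent_intervals] <;>
        exact hcont.intervalIntegrable _ _
    have h2 : (∫ φ in φ₀..π, max (v * Real.cos φ + a) 0 * Real.cos φ) = 0 := by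
      have heq : ∀ φ ∈ Set.uIcc φ₀ π,
          max (v * Real.cos φ + a) 0 * Real.cos φ = 0 := by
        intro φ hφ
        rw [Set.uIcc_of_le hφ₀π] at hφ
        have hcosle : Real.cos φ ≤ t := by
          rw [← hc]
          exact Real.cos_le_cos_of_nonneg_of_le_pi hφ₀0 hφ.2 hφ.1
        have hvt : v * t = -a := by rw [ht]; field_simp
        have hle : v * Real.cos φ + a ≤ 0 := by nlinarith
        rw [max_eq_right hle, zero_mul]
      rw [intervalIntegral.integral_congr heq, intervalIntegral.integral_zero]
    have h1 : (∫ φ in (0:ℝ)..φ₀, max (v * Real.cos φ + a) 0 * Real.cos φ) =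
        ∫ φ in (0:ℝ)..φ₀, (v * Real.cos φ ^ 2 + a * Real.cos φ) := by
      apply intervalIntegral.integral_congr
      intro φ hφ
      rw [Set.uIcc_of_le hφ₀0] at hφ
      have hcosge : t ≤ Real.cos φ := by
        rw [← hc]
        exact Real.cos_le_cos_of_nonneg_of_le_pi hφ.1 hφ₀π hφ.2
      have hvt : v * t = -a := by rw [ht]; field_simp
      have hge : 0 ≤ v * Real.cos φ + a := by nlinarith
      show ((v * Real.cos φ + a) ⊔ 0) * Real.cos φ = v * Real.cos φ ^ 2 + a * Real.cos φ
      rw [max_eq_left hge]; ring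
    have h1' : (∫ φ in (0:ℝ)..φ₀, (v * Real.cos φ ^ 2 + a * Real.cos φ)) =
        v * ((Real.cos φ₀ * Real.sin φ₀ + φ₀) / 2) + a * Real.sin φ₀ := by
      rw [intervalIntegral.integral_add ((by fun_prop : Continuous fun φ => v * Real.cos φ ^ 2).intervalIntegrable _ _)
        ((by fun_prop : Continuous fun φ => a * Real.cos φ).intervalIntegrable _ _),
        intervalIntegral.integral_const_mul, intervalIntegral.integral_const_mul,
        integral_cos_sq, integral_cos]
      simp
    have hS : Real.sqrt (1 - t ^ 2) = Real.sqrt (v ^ 2 - a ^ 2) / v := by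
      rw [eq_div_iff hv0.ne', ← Real.sqrt_sq hv0.le, ← Real.sqrt_mul (by nlinarith)]
      congr 1
      rw [ht]
      field_simp
      rw [Real.sq_sqrt (by positivity)]
    rw [hsplit, h2, add_zero, h1, h1', hc, hs, hS]
    have hπ : π ≠ 0 := Real.pi_ne_zero
    rw [ht]
    field_simp
    ring
end

section
/- Let F(x) = max(x, 0). Then the induced low-pass activation σ(x) = C[|x|]·e^{j arg x} with C[v] = (2/π)∫₀^π F(v cos φ) cos φ dφ satisfies σ(x) = x/2 for all x ∈ ℂ, i.e., the RF ReLU induces a purely linear low-pass response. -/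
open Real Complex

lemma rf_relu_key (v : ℝ) (hv : 0 ≤ v) :
    (∫ φ in (0:ℝ)..π, max (v * Real.cos φ) 0 * Real.cos φ) = v * (π / 4) := by
  have hcont : Continuous fun φ : ℝ => max (v * Real.cos φ) 0 * Real.cos φ := by
    continuity
  have hsplit := intervalIntegral.integral_add_adjacent_intervals
    (a := (0:ℝ)) (b := π/2) (c := π) (μ := MeasureTheory.volume)
    (hcont.intervalIntegrable (0:ℝ) (π/2)) (hcont.intervalIntegrable (π/2) π)
  have h1 : (∫ φ in (0:ℝ)..(π/2), max (v * Real.cos φ) 0 * Real.cos φ)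
      = ∫ φ in (0:ℝ)..(π/2), v * Real.cos φ ^ 2 := by
    apply intervalIntegral.integral_congr
    intro φ hφ
    rw [Set.uIcc_of_le (by positivity)] at hφ
    have hcos : 0 ≤ Real.cos φ := Real.cos_nonneg_of_mem_Icc
      ⟨le_trans (by linarith [Real.pi_pos]) hφ.1, hφ.2⟩
    show (max (v * Real.cos φ) 0) * Real.cos φ = v * Real.cos φ ^ 2
    rw [max_eq_left (mul_nonneg hv hcos)]
    ring
  have h2 : (∫ φ in (π/2:ℝ)..π, max (v * Real.cos φ) 0 * Real.cos φ)
      = ∫ φ in (π/2:ℝ)..π, (0:ℝ) := by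
    apply intervalIntegral.integral_congr
    intro φ hφ
    rw [Set.uIcc_of_le (by linarith [Real.pi_pos])] at hφ
    have hcos : Real.cos φ ≤ 0 := Real.cos_nonpos_of_pi_div_two_le_of_le hφ.1
      (by linarith [Real.pi_pos, hφ.2])
    show (max (v * Real.cos φ) 0) * Real.cos φ = 0
    rw [max_eq_right (by nlinarith), zero_mul]
  rw [← hsplit, h1, h2]
  rw [intervalIntegral.integral_const_mul, integral_cos_sq, intervalIntegral.integral_zero]
  rw [Real.cos_pi_div_two, Real.sin_zero]
  ring

theorem rf_relu_induces_linear_lowpass (C : ℝ → ℝ)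
    (hC : ∀ v, C v = (2 / π) * ∫ φ in (0:ℝ)..π, max (v * Real.cos φ) 0 * Real.cos φ)
    (σ : ℂ → ℂ) (hσ0 : σ 0 = 0)
    (hσ : ∀ x : ℂ, x ≠ 0 →
      σ x = (C ‖x‖ : ℂ) * Complex.exp (Complex.I * (Complex.arg x : ℂ))) :
    ∀ x : ℂ, σ x = x / 2 := by
  intro x
  by_cases hx : x = 0
  · simp [hx, hσ0]
  · have hCval : C ‖x‖ = ‖x‖ / 2 := by
      rw [hC, rf_relu_key _ (norm_nonneg x)]
      have hπ : (π:ℝ) ≠ 0 := Real.pi_ne_zero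
      field_simp
      ring
    rw [hσ x hx, hCval]
    have := Complex.norm_mul_exp_arg_mul_I x
    push_cast
    rw [mul_comm Complex.I]
    rw [div_mul_eq_mul_div, this]
end

section
/- Let F : ℝ → ℝ be monotone nondecreasing with F(0) ≥ 0. Then C[v] = (2/π) ∫₀^π F(v cos φ) cos φ dφ ≥ 0 for all v ≥ 0. -/
open Real

theorem monotone_nonlinearity_fundamental_harmonic_nonneg (F : ℝ → ℝ)
    (hF : Monotone F) (hF0 : 0 ≤ F 0) (v : ℝ) (hv : 0 ≤ v) :
    0 ≤ (2 / π) * ∫ φ in (0:ℝ)..π, F (v * Real.cos φ) * Real.cos φ := by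
  set h : ℝ → ℝ := fun φ => F (v * Real.cos φ) * Real.cos φ with hh
  -- integrability of h on any interval
  have hmeas : MeasureTheory.AEStronglyMeasurable h MeasureTheory.volume := by
    exact ((hF.measurable.comp ((measurable_const.mul Real.measurable_cos))).mul
      Real.measurable_cos).aestronglyMeasurable
  have hbdd : ∀ (w : ℝ) (φ : ℝ),
      ‖F (w * Real.cos φ) * Real.cos φ‖ ≤ max ‖F (abs w)‖ ‖F (-(abs w))‖ := by
    intro w φ
    have haw : |w * Real.cos φ| ≤ abs w := by
      rw [abs_mul]
      nlinarith [Real.abs_cos_le_one φ, abs_nonneg w]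
    obtain ⟨h2, h1⟩ := abs_le.mp haw
    have hub : F (w * Real.cos φ) ≤ F (abs w) := hF h1
    have hlb : F (-(abs w)) ≤ F (w * Real.cos φ) := hF h2
    have key : |F (w * Real.cos φ)| ≤ max ‖F (abs w)‖ ‖F (-(abs w))‖ := by
      rw [abs_le]
      simp only [Real.norm_eq_abs]
      constructor
      · calc -(max (abs (F (abs w))) (abs (F (-(abs w)))))
            ≤ -(abs (F (-(abs w)))) := by simp [le_max_right]
          _ ≤ F (-(abs w)) := neg_abs_le _
          _ ≤ _ := hlb
      · calc F (w * Real.cos φ) ≤ F (abs w) := hub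
          _ ≤ abs (F (abs w)) := le_abs_self _
          _ ≤ _ := le_max_left _ _
    calc ‖F (w * Real.cos φ) * Real.cos φ‖
        = |F (w * Real.cos φ)| * |Real.cos φ| := by
          simp [Real.norm_eq_abs, abs_mul]
      _ ≤ max ‖F (abs w)‖ ‖F (-(abs w))‖ * 1 := by
          apply mul_le_mul key (Real.abs_cos_le_one φ) (abs_nonneg _)
          positivity
      _ = _ := mul_one _
  have hmeas' : ∀ w : ℝ, MeasureTheory.AEStronglyMeasurable
      (fun φ => F (w * Real.cos φ) * Real.cos φ) MeasureTheory.volume := fun w =>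
    ((hF.measurable.comp ((measurable_const.mul Real.measurable_cos))).mul
      Real.measurable_cos).aestronglyMeasurable
  have hint : ∀ (w a b : ℝ), IntervalIntegrable
      (fun φ => F (w * Real.cos φ) * Real.cos φ) MeasureTheory.volume a b := by
    intro w a b
    constructor <;>
    · apply MeasureTheory.Measure.integrableOn_of_bounded _ (hmeas' w)
        (MeasureTheory.ae_of_all _ (hbdd w))
      exact measure_Ioc_lt_top.ne
  have hpi : (0:ℝ) < π := Real.pi_pos
  -- split
  have hsplit : (∫ φ in (0:ℝ)..π, h φ) =
      (∫ φ in (0:ℝ)..(π/2), h φ) + ∫ φ in (π/2:ℝ)..π, h φ := by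
    rw [intervalIntegral.integral_add_adjacent_intervals (hint v 0 (π/2)) (hint v (π/2) π)]
  -- reflection
  have hrefl : (∫ φ in (π/2:ℝ)..π, h φ) =
      ∫ u in (0:ℝ)..(π/2), -(F ((-v) * Real.cos u) * Real.cos u) := by
    have := intervalIntegral.integral_comp_sub_left (a := (0:ℝ)) (b := π/2) h π
    rw [show π - π/2 = π/2 by ring, show π - 0 = π by ring] at this
    rw [← this]
    apply intervalIntegral.integral_congr
    intro u _
    simp only [hh, Real.cos_pi_sub]
    ring_nf
  have hadd : (∫ φ in (0:ℝ)..π, h φ) =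
      ∫ u in (0:ℝ)..(π/2), (h u + -(F ((-v) * Real.cos u) * Real.cos u)) := by
    rw [hsplit, hrefl]
    exact (intervalIntegral.integral_add (hint v 0 (π/2)) (hint (-v) 0 (π/2)).neg).symm
  have hnonneg : 0 ≤ ∫ φ in (0:ℝ)..π, h φ := by
    rw [hadd]
    apply intervalIntegral.integral_nonneg (by linarith)
    intro u hu
    obtain ⟨hu0, hu2⟩ := hu
    have hcos : 0 ≤ Real.cos u := Real.cos_nonneg_of_mem_Icc ⟨by linarith, hu2⟩
    have hFle : F ((-v) * Real.cos u) ≤ F (v * Real.cos u) := by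
      apply hF; nlinarith
    simp only [hh]
    nlinarith
  have : 0 ≤ 2 / π := by positivity
  exact mul_nonneg this hnonneg
end
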